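/- Let k be a field, V a nonzero k-vector space, and R a finite-dimensional nilpotent (nonunital) k-subalgebra of End_k(V) (i.e., Rⁿ = 0 for some positive integer n). Then R is strictly triangularizable. -/

import Mathlib

universe u v

open Submodule Set

section Aux

variable {k : Type u} {V : Type v} [Field k] [AddCommGroup V] [Module k V]
variable (R : NonUnitalSubalgebra k (Module.End k V))

/-- The descending chain `W 0 = V`, `W (i+1) = span (R · W i)`. -/
noncomputable def stmt5W : ℕ → Submodule k V
  | 0 => ⊤
  | (i + 1) => Submodule.span k
      {x | ∃ T ∈ (R : Set (Module.End k V)), ∃ v ∈ stmt5W i, T v = x}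

theorem stmt5W_succ_le (i : ℕ) : stmt5W R (i + 1) ≤ stmt5W R i := by
  induction i with
  | zero => exact le_top
  | succ i ih =>
      refine Submodule.span_le.mpr ?_
      rintro x ⟨T, hT, v, hv, rfl⟩
      exact Submodule.subset_span ⟨T, hT, v, ih hv, rfl⟩

theorem stmt5W_antitone : Antitone (stmt5W R) :=
  antitone_nat_of_succ_le (stmt5W_succ_le R)

theorem stmt5W_apply_mem {T : Module.End k V} (hT : T ∈ R) {v : V} {i : ℕ}
    (hv : v ∈ stmt5W R i) : T v ∈ stmt5W R (i + 1) :=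
  Submodule.subset_span ⟨T, hT, v, hv, rfl⟩

theorem stmt5W_eq_bot (n : ℕ)
    (hnil : ∀ l : List (Module.End k V), (∀ x ∈ l, x ∈ R) → l.length = n → l.prod = 0) :
    stmt5W R n = ⊥ := by
  have key : ∀ m : ℕ, ∀ x ∈ stmt5W R m, ∀ l : List (Module.End k V),
      (∀ x ∈ l, x ∈ R) → l.length + m = n → l.prod x = 0 := by
    intro m
    induction m with
    | zero =>
        intro x _ l hl hlen
        rw [hnil l hl (by simpa using hlen)]
        rfl
    | succ m ih =>
        intro x hx
        refine Submodule.span_induction ?_ ?_ ?_ ?_ hx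
        · rintro _ ⟨T, hT, v, hv, rfl⟩ l hl hlen
          have h2 : (l ++ [T]).prod v = 0 := by
            refine ih v hv (l ++ [T]) ?_ (by simpa using by omega)
            · intro x hx
              rcases List.mem_append.mp hx with h | h
              · exact hl x h
              · simpa using (List.mem_singleton.mp h) ▸ hT
          rw [List.prod_append] at h2
          simpa [Module.End.mul_apply] using h2
        · intro l hl hlen; simp
        · intro a b ha hb iha ihb l hl hlen
          rw [map_add, iha l hl hlen, ihb l hl hlen, add_zero]
        · intro c a ha iha l hl hlen
          rw [map_smul, iha l hl hlen, smul_zero]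
  refine (Submodule.eq_bot_iff _).mpr fun x hx => ?_
  have := key n x hx [] (by simp) (by simp)
  simpa using this

/-- The property of the `j`-th stage set. -/
def stmt5Q (n j : ℕ) (s : Set V) : Prop :=
  LinearIndependent k ((↑) : s → V) ∧ s ⊆ (stmt5W R (n - j) : Set V) ∧
    stmt5W R (n - j) ≤ Submodule.span k s

theorem stmt5_ext_step (n j : ℕ) (s : Set V) (h : stmt5Q R n j s) :
    ∃ t : Set V, stmt5Q R n (j + 1) t ∧ s ⊆ t := by
  obtain ⟨hli, hsub, _⟩ := h
  have hsub' : s ⊆ (stmt5W R (n - (j + 1)) : Set V) :=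
    hsub.trans (stmt5W_antitone R (Nat.sub_le_sub_left (Nat.le_succ j) n))
  obtain ⟨b, hbt, hsb, htb, hbli⟩ := exists_linearIndepOn_extension (v := id) hli hsub'
  exact ⟨b, ⟨hbli, hbt, fun x hx => by simpa using htb ⟨x, hx, rfl⟩⟩, hsb⟩

/-- The chain of linearly independent sets spanning the `stmt5W` filtration. -/
noncomputable def stmt5c (n : ℕ) (hbot : stmt5W R n = ⊥) : ∀ j : ℕ, {s : Set V // stmt5Q R n j s}
  | 0 => ⟨∅, linearIndependent_empty k V, by simp, by simp [hbot]⟩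
  | (j + 1) =>
      ⟨(stmt5_ext_step R n j (stmt5c n hbot j).1 (stmt5c n hbot j).2).choose,
       (stmt5_ext_step R n j (stmt5c n hbot j).1 (stmt5c n hbot j).2).choose_spec.1⟩

theorem stmt5c_subset_succ (n : ℕ) (hbot : stmt5W R n = ⊥) (j : ℕ) :
    (stmt5c R n hbot j).1 ⊆ (stmt5c R n hbot (j + 1)).1 :=
  (stmt5_ext_step R n j (stmt5c R n hbot j).1 (stmt5c R n hbot j).2).choose_spec.2

theorem stmt5c_mono (n : ℕ) (hbot : stmt5W R n = ⊥) {j j' : ℕ} (h : j ≤ j') :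
    (stmt5c R n hbot j).1 ⊆ (stmt5c R n hbot j').1 := by
  induction j' with
  | zero => exact (Nat.le_zero.mp h) ▸ subset_rfl
  | succ j' ih =>
      rcases Nat.lt_or_ge j (j' + 1) with h' | h'
      · exact (ih (Nat.lt_succ_iff.mp h')).trans (stmt5c_subset_succ R n hbot j')
      · have : j = j' + 1 := le_antisymm h h'
        exact this ▸ subset_rfl

end Aux

/-- Chebotar: a finite-dimensional nilpotent nonunital `k`-subalgebra of
`End_k(V)` is strictly triangularizable. -/
theorem stmt_5 {k : Type u} {V : Type v} [Field k] [AddCommGroup V] [Module k V]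
    [Nontrivial V]
    (R : NonUnitalSubalgebra k (Module.End k V)) [Module.Finite k ↥R]
    (n : ℕ) (hn : 0 < n)
    (hnil : ∀ l : List (Module.End k V), (∀ x ∈ l, x ∈ R) → l.length = n → l.prod = 0) :
    ∃ (ι : Type v) (lo : LinearOrder ι), WellFounded lo.lt ∧
      ∃ b : Module.Basis ι k V, ∀ T ∈ (R : Set (Module.End k V)), ∀ i : ι,
        T (b i) ∈ Submodule.span k (⇑b '' {j | lo.lt j i}) := by
  classical
  have hbot : stmt5W R n = ⊥ := stmt5W_eq_bot R n hnil
  set bs : Set V := (stmt5c R n hbot n).1 with hbs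
  obtain ⟨hli, hsubW, hspanW⟩ := (stmt5c R n hbot n).2
  have hspan : ⊤ ≤ Submodule.span k (Set.range ((↑) : bs → V)) := by
    rw [Subtype.range_coe]
    have : stmt5W R (n - n) = ⊤ := by simp [stmt5W]
    rw [← this]; exact hspanW
  let B : Module.Basis bs k V := Module.Basis.mk hli hspan
  have hB : ∀ i : bs, B i = (i : V) := fun i => Module.Basis.mk_apply hli hspan i
  -- the "depth" of each basis vector
  let d : bs → ℕ := fun v => Nat.findGreatest (fun i => (v : V) ∈ stmt5W R i) n
  have hd_mem : ∀ v : bs, (v : V) ∈ stmt5W R (d v) := fun v =>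
    Nat.findGreatest_spec (P := fun i => (v : V) ∈ stmt5W R i) (Nat.zero_le n) (show (v : V) ∈ stmt5W R 0 by rw [stmt5W]; trivial)
  have hd_le : ∀ v : bs, d v ≤ n := fun v => Nat.findGreatest_le n
  have hd_lt : ∀ v : bs, d v < n := by
    intro v
    rcases Nat.lt_or_ge (d v) n with h | h
    · exact h
    · exfalso
      have hdn : d v = n := le_antisymm (hd_le v) h
      have : (v : V) ∈ stmt5W R n := hdn ▸ hd_mem v
      rw [hbot, Submodule.mem_bot] at this
      exact (B.ne_zero v) (by rw [hB v, this])
  have hd_ge : ∀ (v : bs) (i : ℕ), i ≤ n → (v : V) ∈ stmt5W R i → i ≤ d v := fun v i hi hv =>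
    Nat.le_findGreatest hi hv
  -- well ordering of bs and lexicographic order
  obtain ⟨bo, bwf⟩ := exists_wellOrder bs
  letI : LinearOrder bs := bo
  letI : WellFoundedLT bs := bwf
  let f : bs → ℕ ×ₗ bs := fun v => toLex (n - d v, v)
  have finj : Function.Injective f := by
    intro x y h
    have := congrArg (fun p => (ofLex p).2) h
    simpa [f] using this
  let lo : LinearOrder bs := LinearOrder.lift' f finj
  have hwf : WellFounded lo.lt :=
    InvImage.wf f (WellFounded.prod_lex wellFounded_lt bwf.wf)
  refine ⟨bs, lo, hwf, B, ?_⟩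
  intro T hT i
  have hTv : T (B i) ∈ stmt5W R (d i + 1) := by
    rw [hB]; exact stmt5W_apply_mem R hT (hd_mem i)
  have hle1 : d i + 1 ≤ n := hd_lt i
  -- the span of smaller basis vectors contains stmt5W R (d i + 1)
  have hsub2 : ((stmt5c R n hbot (n - (d i + 1))).1 : Set V) ⊆ ⇑B '' {j | lo.lt j i} := by
    intro x hx
    have hxb : x ∈ bs := stmt5c_mono R n hbot (Nat.sub_le n _) hx
    have hxW : x ∈ stmt5W R (d i + 1) := by
      have := (stmt5c R n hbot (n - (d i + 1))).2.2.1 hx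
      rwa [Nat.sub_sub_self hle1] at this
    have hdx : d i + 1 ≤ d ⟨x, hxb⟩ := hd_ge ⟨x, hxb⟩ (d i + 1) hle1 hxW
    refine ⟨⟨x, hxb⟩, ?_, hB _⟩
    have h1 : d ⟨x, hxb⟩ ≤ n := hd_le _
    have h2 : d i < n := hd_lt i
    have h3 : n - d ⟨x, hxb⟩ < n - d i := by omega
    exact Prod.Lex.left _ _ h3
  have hleS : stmt5W R (d i + 1) ≤ Submodule.span k (⇑B '' {j | lo.lt j i}) := by
    have h1 : stmt5W R (d i + 1) ≤
        Submodule.span k ((stmt5c R n hbot (n - (d i + 1))).1 : Set V) := by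
      have := (stmt5c R n hbot (n - (d i + 1))).2.2.2
      rwa [Nat.sub_sub_self hle1] at this
    exact h1.trans (Submodule.span_mono hsub2)
  exact hleS hTv
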